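/- Under the standing assumptions and the STOS double-step relations, for every y⁻ ∈ ℝⁿ and every constant C₁ > 0: Φ(x⁺, y⁺, z⁺, y) ≤ Φ(x, y, z, y⁻) + ‖z − y‖² + ‖g⁺ − ∇H(y⁺)‖² + (3/2)‖g − ∇H(y)‖² + ((3γ + 2)/(2γ))‖y⁺ − z‖² + ((γ(1 + l + 2β) − 1)/(2γ) + C₁)‖y⁺ − y‖² − C₁‖y − y⁻‖². -/

import Mathlib

open scoped RealInnerProductSpace

/-- The merit function `M(x,y,z)` of the paper. -/
noncomputable def merit {n : ℕ}
    (F G H : EuclideanSpace ℝ (Fin n) → ℝ)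
    (H' : EuclideanSpace ℝ (Fin n) → EuclideanSpace ℝ (Fin n))
    (γ : ℝ) (x y z : EuclideanSpace ℝ (Fin n)) : ℝ :=
  F y + G z + H y + ‖y - x‖ ^ 2 / (2*γ) - ‖z - x‖ ^ 2 / (2*γ) + ⟪H' y, z - y⟫

/-- The auxiliary function `Φ(x,y,z,y′) = M(x,y,z) − ½‖z − y‖² + C₁‖y − y′‖²`. -/
noncomputable def phiFun {n : ℕ}
    (F G H : EuclideanSpace ℝ (Fin n) → ℝ)
    (H' : EuclideanSpace ℝ (Fin n) → EuclideanSpace ℝ (Fin n))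
    (γ C₁ : ℝ) (x y z y' : EuclideanSpace ℝ (Fin n)) : ℝ :=
  merit F G H H' γ x y z - (1/2) * ‖z - y‖ ^ 2 + C₁ * ‖y - y'‖ ^ 2

lemma quad_pos_aux (A B : ℝ) (ht : ∀ t : ℝ, 0 < t → t ≤ 1/2 → 0 ≤ t * A + t ^ 2 * B) :
    0 ≤ A := by
  by_contra hcon
  push_neg at hcon
  rcases le_or_gt B 0 with hB0 | hB0
  · have := ht (1/2) (by norm_num) (le_refl _)
    nlinarith
  · have hApos : 0 < -A := by linarith
    have ht0pos : 0 < min (1/2) (-A / (2*B)) := lt_min (by norm_num) (by positivity)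
    have h1 := ht _ ht0pos (min_le_left _ _)
    have h2 : min (1/2) (-A / (2*B)) * (2*B) ≤ -A :=
      (le_div_iff₀ (by positivity)).1 (min_le_right _ _)
    nlinarith [mul_le_mul_of_nonneg_left h2 ht0pos.le, mul_pos ht0pos hApos]

lemma prox_conv {n : ℕ} (F : EuclideanSpace ℝ (Fin n) → ℝ) (l γ : ℝ) (hγ : 0 < γ)
    (hconv : ConvexOn ℝ Set.univ (fun u => F u + (l/2) * ‖u‖ ^ 2))
    (p v u : EuclideanSpace ℝ (Fin n))
    (hmin : ∀ w, F v + ‖v - p‖ ^ 2 / (2*γ) ≤ F w + ‖w - p‖ ^ 2 / (2*γ)) :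
    0 ≤ F u - F v + l / 2 * ‖u - v‖ ^ 2 + ⟪v - p, u - v⟫ / γ := by
  have main : ∀ t : ℝ, 0 < t → t ≤ 1/2 →
      0 ≤ t * (F u - F v + l / 2 * ‖u - v‖ ^ 2 + ⟪v - p, u - v⟫ / γ)
        + t ^ 2 * (‖u - v‖ ^ 2 / (2*γ) - l / 2 * ‖u - v‖ ^ 2) := by
    intro t ht0 ht1
    have hmin' := hmin (v + t • (u - v))
    have hcv0 := hconv.2 (Set.mem_univ v) (Set.mem_univ u)
      (by linarith : (0:ℝ) ≤ 1 - t) (le_of_lt ht0) (by ring)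
    have hmeq : (1 - t) • v + t • u = v + t • (u - v) := by module
    rw [hmeq] at hcv0
    have hcv : F (v + t • (u - v)) + l / 2 * ‖v + t • (u - v)‖ ^ 2 ≤
        (1 - t) * (F v + l / 2 * ‖v‖ ^ 2) + t * (F u + l / 2 * ‖u‖ ^ 2) := by
      simpa [smul_eq_mul] using hcv0
    have e1 : ‖v + t • (u - v) - p‖ ^ 2
        = ‖v - p‖ ^ 2 + 2 * t * ⟪v - p, u - v⟫ + t ^ 2 * ‖u - v‖ ^ 2 := by
      have h : v + t • (u - v) - p = (v - p) + t • (u - v) := by module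
      rw [h, norm_add_sq_real, real_inner_smul_right, norm_smul, Real.norm_eq_abs,
        mul_pow, sq_abs]
      ring
    have e2 : ‖v + t • (u - v)‖ ^ 2
        = ‖v‖ ^ 2 + 2 * t * ⟪v, u - v⟫ + t ^ 2 * ‖u - v‖ ^ 2 := by
      rw [norm_add_sq_real, real_inner_smul_right, norm_smul, Real.norm_eq_abs,
        mul_pow, sq_abs]
      ring
    have e3 : ‖u‖ ^ 2 = ‖v‖ ^ 2 + 2 * ⟪v, u - v⟫ + ‖u - v‖ ^ 2 := by
      have h : u = v + (u - v) := by module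
      nth_rewrite 1 [h]
      rw [norm_add_sq_real]
    rw [e1] at hmin'
    rw [e2] at hcv
    have hsum : F v + ‖v - p‖ ^ 2 / (2*γ) ≤
        (1 - t) * (F v + l / 2 * ‖v‖ ^ 2) + t * (F u + l / 2 * ‖u‖ ^ 2)
        - l / 2 * (‖v‖ ^ 2 + 2 * t * ⟪v, u - v⟫ + t ^ 2 * ‖u - v‖ ^ 2)
        + (‖v - p‖ ^ 2 + 2 * t * ⟪v - p, u - v⟫ + t ^ 2 * ‖u - v‖ ^ 2) / (2*γ) := by
      linarith [hmin', hcv]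
    have hexp : (1 - t) * (F v + l / 2 * ‖v‖ ^ 2) + t * (F u + l / 2 * ‖u‖ ^ 2)
        - l / 2 * (‖v‖ ^ 2 + 2 * t * ⟪v, u - v⟫ + t ^ 2 * ‖u - v‖ ^ 2)
        + (‖v - p‖ ^ 2 + 2 * t * ⟪v - p, u - v⟫ + t ^ 2 * ‖u - v‖ ^ 2) / (2*γ)
        - (F v + ‖v - p‖ ^ 2 / (2*γ))
        = t * (F u - F v + l / 2 * ‖u - v‖ ^ 2 + ⟪v - p, u - v⟫ / γ)
          + t ^ 2 * (‖u - v‖ ^ 2 / (2*γ) - l / 2 * ‖u - v‖ ^ 2) := by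
      rw [e3]
      field_simp
      ring
    linarith [hsum, hexp.le, hexp.ge]
  exact quad_pos_aux _ _ main

lemma descent {n : ℕ} (H : EuclideanSpace ℝ (Fin n) → ℝ)
    (H' : EuclideanSpace ℝ (Fin n) → EuclideanSpace ℝ (Fin n)) (β : ℝ) (hβ : 0 < β)
    (hHdiff : ∀ u, HasGradientAt H (H' u) u)
    (hHlip : ∀ u v, ‖H' u - H' v‖ ≤ β * ‖u - v‖)
    (y Y : EuclideanSpace ℝ (Fin n)) :
    H Y ≤ H y + ⟪H' y, Y - y⟫ + β / 2 * ‖Y - y‖ ^ 2 := by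
  set d := Y - y with hd
  have hyd : y + d = Y := by rw [hd]; abel
  have hline : ∀ t : ℝ, HasDerivAt (fun t : ℝ => y + t • d) d t := by
    intro t
    simpa using ((hasDerivAt_id t).smul_const d).const_add y
  have hphi : ∀ t : ℝ, HasDerivAt (fun t : ℝ => H (y + t • d)) ⟪H' (y + t • d), d⟫ t := by
    intro t
    have := ((hHdiff (y + t • d)).hasFDerivAt).comp_hasDerivAt t (hline t)
    simp [InnerProductSpace.toDual_apply_apply] at this
    exact this
  set g : ℝ → ℝ := fun t => H (y + t • d) - t * ⟪H' y, d⟫ - β / 2 * ‖d‖ ^ 2 * t ^ 2 with hg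
  have hgderiv : ∀ t : ℝ, HasDerivAt g (⟪H' (y + t • d), d⟫ - ⟪H' y, d⟫ - β * t * ‖d‖ ^ 2) t := by
    intro t
    have h1 : HasDerivAt (fun t : ℝ => t * ⟪H' y, d⟫) ⟪H' y, d⟫ t := by
      simpa using (hasDerivAt_id t).mul_const ⟪H' y, d⟫
    have h2' := (hasDerivAt_pow 2 t).const_mul (β / 2 * ‖d‖ ^ 2)
    have heq : β / 2 * ‖d‖ ^ 2 * (↑(2:ℕ) * t ^ (2 - 1)) = β * t * ‖d‖ ^ 2 := by
      push_cast; ring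
    have h2 : HasDerivAt (fun t : ℝ => β / 2 * ‖d‖ ^ 2 * t ^ 2) (β * t * ‖d‖ ^ 2) t :=
      heq ▸ h2'
    exact ((hphi t).sub h1).sub h2
  have hanti : AntitoneOn g (Set.Icc 0 1) := by
    apply antitoneOn_of_deriv_nonpos (convex_Icc 0 1)
    · exact (Differentiable.continuous (fun t => (hgderiv t).differentiableAt)).continuousOn
    · intro t _
      exact ((hgderiv t).differentiableAt).differentiableWithinAt
    · intro t ht
      rw [interior_Icc] at ht
      rw [(hgderiv t).deriv]
      have hcs : ⟪H' (y + t • d) - H' y, d⟫ ≤ ‖H' (y + t • d) - H' y‖ * ‖d‖ :=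
        real_inner_le_norm _ _
      have hl : ‖H' (y + t • d) - H' y‖ ≤ β * (t * ‖d‖) := by
        have := hHlip (y + t • d) y
        simpa [norm_smul, abs_of_pos ht.1] using this
      have hinner : ⟪H' (y + t • d), d⟫ - ⟪H' y, d⟫ = ⟪H' (y + t • d) - H' y, d⟫ := by
        rw [inner_sub_left]
      rw [hinner]
      nlinarith [norm_nonneg d, norm_nonneg (H' (y + t • d) - H' y), ht.1]
  have h01 := hanti (Set.left_mem_Icc.2 zero_le_one) (Set.right_mem_Icc.2 zero_le_one) zero_le_one
  have hg0 : g 0 = H y := by simp [hg]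
  have hg1 : g 1 = H Y - ⟪H' y, d⟫ - β / 2 * ‖d‖ ^ 2 := by
    simp [hg, hyd]
  rw [hg0, hg1] at h01
  linarith [h01]

set_option maxHeartbeats 4000000 

lemma key_quad {n : ℕ} (γ β : ℝ) (hγ : 0 < γ) (hβ : 0 < β) (hβ1 : β ≤ 1)
    (y Y z Z x G2 h H2 : EuclideanSpace ℝ (Fin n))
    (hlip : ‖H2 - h‖ ≤ β * ‖Y - y‖) :
    ⟪Y - x, y - Y⟫ / γ
      + (‖z - ((2:ℝ) • Y - γ • G2 - x)‖ ^ 2 / (2*γ) - ‖Z - ((2:ℝ) • Y - γ • G2 - x)‖ ^ 2 / (2*γ))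
      + ⟪h, Y - y⟫ + β / 2 * ‖Y - y‖ ^ 2
      + (‖Y - (x + Z - Y)‖ ^ 2 / (2*γ) - ‖Z - (x + Z - Y)‖ ^ 2 / (2*γ)
          - ‖y - x‖ ^ 2 / (2*γ) + ‖z - x‖ ^ 2 / (2*γ))
      + ⟪H2, Z - Y⟫ - ⟪h, z - y⟫ - 1/2 * ‖Z - Y‖ ^ 2 + 1/2 * ‖z - y‖ ^ 2
    ≤ ‖z - y‖ ^ 2 + ‖G2 - H2‖ ^ 2 + (3*γ + 2)/(2*γ) * ‖Y - z‖ ^ 2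
      + (γ * (1 + 2*β) - 1)/(2*γ) * ‖Y - y‖ ^ 2 := by
  have hid :
      (⟪Y - x, y - Y⟫ / γ
      + (‖z - ((2:ℝ) • Y - γ • G2 - x)‖ ^ 2 / (2*γ) - ‖Z - ((2:ℝ) • Y - γ • G2 - x)‖ ^ 2 / (2*γ))
      + ⟪h, Y - y⟫ + β / 2 * ‖Y - y‖ ^ 2
      + (‖Y - (x + Z - Y)‖ ^ 2 / (2*γ) - ‖Z - (x + Z - Y)‖ ^ 2 / (2*γ)
          - ‖y - x‖ ^ 2 / (2*γ) + ‖z - x‖ ^ 2 / (2*γ))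
      + ⟪H2, Z - Y⟫ - ⟪h, z - y⟫ - 1/2 * ‖Z - Y‖ ^ 2 + 1/2 * ‖z - y‖ ^ 2)
      - (‖z - y‖ ^ 2 + ‖G2 - H2‖ ^ 2 + (3*γ + 2)/(2*γ) * ‖Y - z‖ ^ 2
          + (γ * (1 + 2*β) - 1)/(2*γ) * ‖Y - y‖ ^ 2)
      = -( (1/10) * ‖(5:ℝ) • Y - y - (3:ℝ) • z - Z - h + H2‖ ^ 2
          + (1/460) * ‖(2:ℝ) • y + (6:ℝ) • z - (8:ℝ) • Z - (20:ℝ) • G2 - (3:ℝ) • h + (23:ℝ) • H2‖ ^ 2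
          + (1/2162) * ‖(47:ℝ) • z - (38:ℝ) • y - (9:ℝ) • Z - (11:ℝ) • G2 + (11:ℝ) • h‖ ^ 2
          + (1/1974) * ‖(21:ℝ) • y - (21:ℝ) • Z - (10:ℝ) • G2 + (10:ℝ) • h‖ ^ 2
          + (1/42) * ‖G2 - h‖ ^ 2 )
        - β / 2 * ‖Y - y‖ ^ 2 + 1/4 * ‖H2 - h‖ ^ 2 := by
    simp only [← real_inner_self_eq_norm_sq]
    simp only [inner_sub_left, inner_sub_right, inner_add_left, inner_add_right,
      real_inner_smul_left, real_inner_smul_right, real_inner_comm]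
    field_simp
    ring
  have hsq : ‖H2 - h‖ ^ 2 ≤ β ^ 2 * ‖Y - y‖ ^ 2 := by
    have := mul_le_mul hlip hlip (norm_nonneg _) (by positivity)
    nlinarith [norm_nonneg (H2 - h)]
  nlinarith [hid, hsq, sq_nonneg ‖(5:ℝ) • Y - y - (3:ℝ) • z - Z - h + H2‖,
    sq_nonneg ‖(2:ℝ) • y + (6:ℝ) • z - (8:ℝ) • Z - (20:ℝ) • G2 - (3:ℝ) • h + (23:ℝ) • H2‖,
    sq_nonneg ‖(47:ℝ) • z - (38:ℝ) • y - (9:ℝ) • Z - (11:ℝ) • G2 + (11:ℝ) • h‖,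
    sq_nonneg ‖(21:ℝ) • y - (21:ℝ) • Z - (10:ℝ) • G2 + (10:ℝ) • h‖,
    sq_nonneg ‖G2 - h‖, sq_nonneg ‖Y - y‖,
    mul_nonneg (mul_nonneg hβ.le (sub_nonneg.2 hβ1)) (sq_nonneg ‖Y - y‖)]

/-- The pathwise descent inequality (eq. 24) underlying Theorem 3.2 of the paper. -/
theorem stmt_5 {n : ℕ}
    (F G H : EuclideanSpace ℝ (Fin n) → ℝ)
    (F' H' : EuclideanSpace ℝ (Fin n) → EuclideanSpace ℝ (Fin n))
    (γ L l β : ℝ) (hγ : 0 < γ) (hL : 0 < L) (hβ : 0 < β) (hβ1 : β ≤ 1)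
    (hFdiff : ∀ u, HasGradientAt F (F' u) u)
    (hFlip : ∀ u v, ‖F' u - F' v‖ ≤ L * ‖u - v‖)
    (hFconv : ConvexOn ℝ Set.univ (fun u => F u + (l/2) * ‖u‖ ^ 2))
    (hG : LowerSemicontinuous G)
    (hHdiff : ∀ u, HasGradientAt H (H' u) u)
    (hHlip : ∀ u v, ‖H' u - H' v‖ ≤ β * ‖u - v‖)
    (w x xp y yp z zp g gp : EuclideanSpace ℝ (Fin n))
    (hy : ∀ u, F y + ‖y - w‖ ^ 2 / (2*γ) ≤ F u + ‖u - w‖ ^ 2 / (2*γ))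
    (hz : ∀ u, G z + ‖z - ((2:ℝ) • y - γ • g - w)‖ ^ 2 / (2*γ)
        ≤ G u + ‖u - ((2:ℝ) • y - γ • g - w)‖ ^ 2 / (2*γ))
    (hx : x = w + z - y)
    (hyp : ∀ u, F yp + ‖yp - x‖ ^ 2 / (2*γ) ≤ F u + ‖u - x‖ ^ 2 / (2*γ))
    (hzp : ∀ u, G zp + ‖zp - ((2:ℝ) • yp - γ • gp - x)‖ ^ 2 / (2*γ)
        ≤ G u + ‖u - ((2:ℝ) • yp - γ • gp - x)‖ ^ 2 / (2*γ))
    (hxp : xp = x + zp - yp)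
    (ym : EuclideanSpace ℝ (Fin n)) (C₁ : ℝ) (hC₁ : 0 < C₁) :
    phiFun F G H H' γ C₁ xp yp zp y
      ≤ phiFun F G H H' γ C₁ x y z ym
        + ‖z - y‖ ^ 2 + ‖gp - H' yp‖ ^ 2 + (3/2) * ‖g - H' y‖ ^ 2
        + ((3*γ + 2)/(2*γ)) * ‖yp - z‖ ^ 2
        + ((γ * (1 + l + 2*β) - 1)/(2*γ) + C₁) * ‖yp - y‖ ^ 2
        - C₁ * ‖y - ym‖ ^ 2 := by

  subst hxp
  have hrev : ‖y - yp‖ = ‖yp - y‖ := norm_sub_rev _ _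
  have A1 : 0 ≤ F y - F yp + l / 2 * ‖yp - y‖ ^ 2 + ⟪yp - x, y - yp⟫ / γ := by
    have := prox_conv F l γ hγ hFconv x yp y hyp
    rwa [hrev] at this
  have A2 := hzp z
  have A3 : H yp ≤ H y + ⟪H' y, yp - y⟫ + β / 2 * ‖yp - y‖ ^ 2 :=
    descent H H' β hβ hHdiff hHlip y yp
  have KEY := key_quad γ β hγ hβ hβ1 y yp z zp x gp (H' y) (H' yp) (hHlip yp y)
  have hsplit : ((γ * (1 + l + 2*β) - 1)/(2*γ) + C₁) * ‖yp - y‖ ^ 2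
      = (γ * (1 + 2*β) - 1)/(2*γ) * ‖yp - y‖ ^ 2 + l / 2 * ‖yp - y‖ ^ 2
        + C₁ * ‖yp - y‖ ^ 2 := by
    field_simp
    ring
  have hg0 : (0:ℝ) ≤ ‖g - H' y‖ ^ 2 := sq_nonneg _
  simp only [phiFun, merit]
  linarith [A1, A2, A3, KEY, hg0, hsplit.le, hsplit.ge]
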